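/- arXiv:2509.15070 — 2 statements merged into one kernel-verified Lean document; each statement's English description precedes it below -/
import Mathlib

section
/- Let G and F be groups and Ω a finite F-set, and form the wreath product G ≀_Ω F. For any element x = (g, f) of G ≀_Ω F, there exists an element y = (g', f) with the same F-component f such that x and y are conjugate in G ≀_Ω F and such that, for every orbit O of the action of the subgroup generated by f (Subgroup.zpowers f ≤ F) on Ω, there is at most one ω ∈ O with g' ω ≠ 1; i.e. for all ω₁, ω₂ in the same ⟨f⟩-orbit, if g' ω₁ ≠ 1 and g' ω₂ ≠ 1 then ω₁ = ω₂. (Discrete-group case of the paper's Lemma 'lem_wr_conjugate'.) -/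
/-!
Wreath products `G ≀_Ω F = (Ω → G) ⋊ F` with the coordinate-permutation action.
-/

namespace WreathFormalization

variable (G F Ω : Type*) [Group G] [Group F] [MulAction F Ω]

/-- The coordinate-permutation automorphism of `Ω → G` associated to `f : F`,
characterized by `(wreathAut G F Ω f g) ω = g (f⁻¹ • ω)`. -/
def wreathAut (f : F) : (Ω → G) ≃* (Ω → G) where
  toFun g ω := g (f⁻¹ • ω)
  invFun g ω := g (f • ω)
  left_inv g := by funext ω; simp
  right_inv g := by funext ω; simp
  map_mul' g h := rfl

/-- The coordinate-permutation action `φ : F →* MulAut (Ω → G)`. -/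
def wreathAction : F →* MulAut (Ω → G) where
  toFun := wreathAut G F Ω
  map_one' := MulEquiv.ext fun g => funext fun ω => by simp [wreathAut]
  map_mul' f₁ f₂ := MulEquiv.ext fun g => funext fun ω => by
    simp [wreathAut, MulAut.mul_apply, mul_smul]

/-- The wreath product `G ≀_Ω F`. -/
abbrev WreathProduct := (Ω → G) ⋊[wreathAction G F Ω] F

/-- `prodAux c k = c k * c (k-1) * ⋯ * c 1`. -/
private def prodAux {G : Type*} [Group G] (c : ℕ → G) : ℕ → G
  | 0 => 1
  | k + 1 => c (k + 1) * prodAux c k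

/-- Any element `(g, f)` of `G ≀_Ω F` (with `Ω` a finite `F`-set) is conjugate to an element
`(g', f)` with the same `F`-component such that `g'` has at most one nontrivial value in each
orbit of `⟨f⟩ = Subgroup.zpowers f` on `Ω`. -/
theorem exists_conj_one_nontrivial_coordinate_per_orbit
    {G F : Type*} [Group G] [Group F] {Ω : Type*} [Finite Ω] [MulAction F Ω]
    (g : Ω → G) (f : F) :
    ∃ g' : Ω → G,
      IsConj (⟨g, f⟩ : WreathProduct G F Ω) (⟨g', f⟩ : WreathProduct G F Ω) ∧
      ∀ ω₁ ω₂ : Ω, ω₁ ∈ MulAction.orbit (Subgroup.zpowers f) ω₂ →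
        g' ω₁ ≠ 1 → g' ω₂ ≠ 1 → ω₁ = ω₂ := by
  classical
  set σ : Equiv.Perm Ω := MulAction.toPermHom F Ω f with hσ
  have hσapp : ∀ (z : ℤ) (x : Ω), f ^ z • x = (σ ^ z) x := by
    intro z x
    have : σ ^ z = MulAction.toPermHom F Ω (f ^ z) := (map_zpow _ _ _).symm
    rw [this]; rfl
  have hm : 0 < orderOf σ := orderOf_pos σ
  set rep : Ω → Ω :=
    fun ω => (Quotient.mk (MulAction.orbitRel (Subgroup.zpowers f) Ω) ω).out with hrepdef
  have hrep_orbit : ∀ ω : Ω, ∃ k : ℕ, f ^ k • rep ω = ω := by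
    intro ω
    have h1 : (Quotient.mk (MulAction.orbitRel (Subgroup.zpowers f) Ω) (rep ω)) =
        Quotient.mk (MulAction.orbitRel (Subgroup.zpowers f) Ω) ω := Quotient.out_eq _
    have h2 : rep ω ∈ MulAction.orbit (Subgroup.zpowers f) ω := Quotient.exact h1
    obtain ⟨u, hu⟩ := h2
    obtain ⟨z, hz⟩ := Subgroup.mem_zpowers_iff.mp u.2
    have hzω : f ^ (-z) • rep ω = ω := by
      have hu' : (f ^ z) • ω = rep ω := by rw [hz]; exact hu
      rw [← hu', zpow_neg, inv_smul_smul]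
    have hnn : (0 : ℤ) ≤ (-z) % (orderOf σ : ℤ) :=
      Int.emod_nonneg _ (by exact_mod_cast hm.ne')
    refine ⟨((-z) % (orderOf σ : ℤ)).toNat, ?_⟩
    rw [← zpow_natCast, Int.toNat_of_nonneg hnn, hσapp, zpow_mod_orderOf, ← hσapp]
    exact hzω
  -- the length of each point along its orbit
  set K : Ω → ℕ := fun ω => Nat.find (hrep_orbit ω) with hKdef
  have hK : ∀ ω, f ^ K ω • rep ω = ω := fun ω => Nat.find_spec (hrep_orbit ω)
  -- the conjugator and the new element
  set h : Ω → G := fun ω => (prodAux (fun j => g (f ^ j • rep ω)) (K ω))⁻¹ with hhdef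
  set g' : Ω → G := fun ω => h ω * g ω * (h (f⁻¹ • ω))⁻¹ with hg'def
  -- `rep` is constant on orbits
  have hrep_inv : ∀ ω : Ω, rep (f⁻¹ • ω) = rep ω := by
    intro ω
    have : (Quotient.mk (MulAction.orbitRel (Subgroup.zpowers f) Ω) (f⁻¹ • ω)) =
        Quotient.mk (MulAction.orbitRel (Subgroup.zpowers f) Ω) ω :=
      Quotient.sound ⟨⟨f⁻¹, Subgroup.inv_mem _ (Subgroup.mem_zpowers f)⟩, rfl⟩
    simp only [hrepdef, this]
  -- if g' is nontrivial at ω then ω is the chosen orbit representative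
  have hkey : ∀ ω : Ω, g' ω ≠ 1 → ω = rep ω := by
    intro ω hne
    by_contra hωrep
    rcases Nat.eq_zero_or_pos (K ω) with hK0 | hKpos
    · have := hK ω
      rw [hK0, pow_zero, one_smul] at this
      exact hωrep this.symm
    obtain ⟨k, hk⟩ : ∃ k, K ω = k + 1 := ⟨K ω - 1, (Nat.succ_pred_eq_of_pos hKpos).symm⟩
    -- f⁻¹ • ω sits one step earlier on the orbit
    have hprev : f ^ k • rep ω = f⁻¹ • ω := by
      have hKω := hK ω
      rw [hk, pow_succ', mul_smul] at hKω
      conv_rhs => rw [← hKω]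
      rw [inv_smul_smul]
    have hKprev : K (f⁻¹ • ω) = k := by
      have hle : K (f⁻¹ • ω) ≤ k := Nat.find_le (by rw [hrep_inv]; exact hprev)
      have hge : k ≤ K (f⁻¹ • ω) := by
        have hspec : f ^ (K (f⁻¹ • ω)) • rep ω = f⁻¹ • ω := by
          have := hK (f⁻¹ • ω); rwa [hrep_inv] at this
        have : f ^ (K (f⁻¹ • ω) + 1) • rep ω = ω := by
          rw [pow_succ', mul_smul, hspec, smul_inv_smul]
        have hfind : K ω ≤ K (f⁻¹ • ω) + 1 := Nat.find_le this
        omega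
      omega
    -- now compute g' ω = 1
    apply hne
    have hgω : g (f ^ (k + 1) • rep ω) = g ω := by rw [← hk, hK]
    calc g' ω = h ω * g ω * (h (f⁻¹ • ω))⁻¹ := rfl
      _ = 1 := by
        rw [hhdef]
        simp only [hrep_inv, hKprev, hk]
        show ((prodAux (fun j => g (f ^ j • rep ω)) (k + 1))⁻¹ * g ω) *
          ((prodAux (fun j => g (f ^ j • rep ω)) k)⁻¹)⁻¹ = 1
        rw [prodAux, hgω]
        group
  refine ⟨g', ?_, ?_⟩
  · rw [isConj_iff]
    refine ⟨⟨h, 1⟩, ?_⟩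
    rw [mul_inv_eq_iff_eq_mul]
    show (⟨h, 1⟩ * ⟨g, f⟩ : WreathProduct G F Ω) = ⟨g', f⟩ * ⟨h, 1⟩
    refine SemidirectProduct.ext ?_ ?_
    · show h * (wreathAction G F Ω 1 g) = g' * (wreathAction G F Ω f h)
      rw [map_one]
      funext ω
      show h ω * g ω = g' ω * h (f⁻¹ • ω)
      rw [hg'def]
      group
    · show (1 : F) * f = f * 1
      rw [one_mul, mul_one]
  · intro ω₁ ω₂ horb h1 h2
    have e1 := hkey ω₁ h1
    have e2 := hkey ω₂ h2
    have : (Quotient.mk (MulAction.orbitRel (Subgroup.zpowers f) Ω) ω₁) =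
        Quotient.mk (MulAction.orbitRel (Subgroup.zpowers f) Ω) ω₂ :=
      Quotient.sound horb
    rw [e1, e2, hrepdef]
    simp only [this]

end WreathFormalization
end

section
/- Let Ω be a finite set and, for S ⊆ Ω, let F_S = {t : Ω → [0,1] | t ω = 1 for all ω ∉ S} ⊆ [0,1]^Ω, and for j : ℕ let Y_j = ⋃_{S ⊆ Ω, |S| = j} F_S. Fix j with j < |Ω|, let A be a C*-algebra (with its canonical star order), and let f : Y_j → A be a continuous function that vanishes on Y_{j-1} when j ≥ 1. Define f̃ on Y_{j+1} as follows: for t ∈ F_S with |S| = j+1, let m = max_{s ∈ S} t s; if m = 0 set f̃ t = 0, and otherwise set f̃ t = m • f (r_S t), where (r_S t) s = (t s) / m for s ∈ S and (r_S t) ω = 1 for ω ∉ S (note r_S t ∈ Y_j). Then: (i) the value f̃ t does not depend on the choice of S with |S| = j+1 and t ∈ F_S, so f̃ : Y_{j+1} → A is well-defined; (ii) f̃ is continuous; (iii) f̃ agrees with f on Y_j ⊆ Y_{j+1}; (iv) ‖f̃ t‖ ≤ sup_{y ∈ Y_j} ‖f y‖ for every t ∈ Y_{j+1}; (v) if f y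 ≥ 0 for all y ∈ Y_j, then f̃ t ≥ 0 for all t ∈ Y_{j+1}. (The homogeneous extension construction in the proof of the paper's Proposition 'prop_admissible_cylinder'.) -/
/-!
The 1-homogeneous (with respect to the `ℓ^∞`-metric) extension of a continuous function from
the `j`-dimensional skeleton `Y_j = ⋃_{|S| = j} F_S` of faces of the cube `[0,1]^Ω` through
the all-ones vertex, to the `(j+1)`-dimensional skeleton `Y_{j+1}`, with values in a
(possibly nonunital) C*-algebra.
-/

namespace HomogeneousExtension

variable (Ω : Type*) [Fintype Ω] [DecidableEq Ω]

/-- The face `F_S ⊆ [0,1]^Ω` through the vertex with all coordinates `1`: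
points of the cube whose coordinates off `S` are all equal to `1`. -/
def face (S : Finset Ω) : Set (Ω → ℝ) :=
  {t | (∀ ω, t ω ∈ Set.Icc (0 : ℝ) 1) ∧ ∀ ω ∉ S, t ω = 1}

/-- The skeleton `Y_j = ⋃_{S ⊆ Ω, |S| = j} F_S`. -/
def skeleton (j : ℕ) : Set (Ω → ℝ) :=
  {t | ∃ S : Finset Ω, S.card = j ∧ t ∈ face Ω S}

/-- The rescaled point `r_S t`: `(r_S t) s = t s / m` for `s ∈ S`, and `(r_S t) ω = 1`
for `ω ∉ S`. -/
noncomputable def rescale (S : Finset Ω) (m : ℝ) (t : Ω → ℝ) : Ω → ℝ :=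
  fun ω => if ω ∈ S then t ω / m else 1

variable {Ω}

lemma isClosed_face (S : Finset Ω) : IsClosed (face Ω S) := by
  have : face Ω S = (⋂ ω, (fun t : Ω → ℝ => t ω) ⁻¹' Set.Icc (0:ℝ) 1) ∩
      (⋂ ω ∈ {ω | ω ∉ S}, (fun t : Ω → ℝ => t ω) ⁻¹' {1}) := by
    ext t
    simp [face, Set.mem_iInter]
  rw [this]
  exact (isClosed_iInter fun ω => isClosed_Icc.preimage (continuous_apply ω)).inter
    (isClosed_biInter fun ω _ => (isClosed_singleton).preimage (continuous_apply ω))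

lemma isCompact_skeleton (j : ℕ) : IsCompact (skeleton Ω j) := by
  have h : skeleton Ω j = ⋃ S ∈ {S : Finset Ω | S.card = j}, face Ω S := by
    ext t; simp [skeleton]
  rw [h]
  refine (Set.toFinite _).isCompact_biUnion fun S _ => ?_
  refine IsCompact.of_isClosed_subset (isCompact_univ_pi fun _ : Ω => isCompact_Icc (a := (0:ℝ)) (b := 1)) (isClosed_face S) ?_
  intro t ht ω _
  exact ht.1 ω

lemma skeleton_nonempty {j : ℕ} (h : j ≤ Fintype.card Ω) : (skeleton Ω j).Nonempty := by
  obtain ⟨S, -, hS⟩ := Finset.exists_subset_card_eq (s := (Finset.univ : Finset Ω)) (n := j) (by simpa using h)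
  exact ⟨fun _ => 1, S, hS, fun ω => ⟨zero_le_one, le_refl 1⟩, fun ω _ => rfl⟩

lemma nonempty_of_card_succ {S : Finset Ω} {j : ℕ} (hS : S.card = j + 1) : S.Nonempty :=
  Finset.card_pos.mp (by rw [hS]; exact Nat.succ_pos j)

lemma isGreatest_sup' (S : Finset Ω) (hne : S.Nonempty) (t : Ω → ℝ) :
    IsGreatest ((fun s => t s) '' (S : Set Ω)) (S.sup' hne t) := by
  constructor
  · obtain ⟨s, hs, e⟩ := Finset.exists_mem_eq_sup' hne t
    exact ⟨s, hs, e.symm⟩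
  · rintro x ⟨s, hs, rfl⟩
    exact Finset.le_sup' t hs

lemma sup'_nonneg_of_face {S : Finset Ω} (hne : S.Nonempty) {t : Ω → ℝ}
    (ht : t ∈ face Ω S) : 0 ≤ S.sup' hne t := by
  obtain ⟨s, hs⟩ := hne
  exact le_trans (ht.1 s).1 (Finset.le_sup' t hs)

lemma sup'_le_one_of_face {S : Finset Ω} (hne : S.Nonempty) {t : Ω → ℝ}
    (ht : t ∈ face Ω S) : S.sup' hne t ≤ 1 :=
  Finset.sup'_le hne t fun s _ => (ht.1 s).2

lemma rescale_mem_skeleton {S : Finset Ω} {j : ℕ} (hS : S.card = j + 1) {t : Ω → ℝ}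
    (ht : t ∈ face Ω S) (hm : S.sup' (nonempty_of_card_succ hS) t ≠ 0) :
    rescale Ω S (S.sup' (nonempty_of_card_succ hS) t) t ∈ skeleton Ω j := by
  have hne := nonempty_of_card_succ hS
  set m := S.sup' hne t with hmdef
  have hmpos : 0 < m := lt_of_le_of_ne (sup'_nonneg_of_face hne ht) (Ne.symm hm)
  obtain ⟨s₀, hs₀, hes⟩ := Finset.exists_mem_eq_sup' hne t
  refine ⟨S.erase s₀, by rw [Finset.card_erase_of_mem hs₀, hS]; rfl, ?_, ?_⟩
  · intro ω
    by_cases hω : ω ∈ S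
    · simp only [rescale, if_pos hω]
      exact ⟨div_nonneg (ht.1 ω).1 hmpos.le,
        (div_le_one hmpos).mpr (Finset.le_sup' t hω)⟩
    · simp only [rescale, if_neg hω]
      exact ⟨zero_le_one, le_refl 1⟩
  · intro ω hω
    by_cases hωS : ω ∈ S
    · have hωs₀ : ω = s₀ := by
        by_contra hne'
        exact hω (Finset.mem_erase.mpr ⟨hne', hωS⟩)
      subst hωs₀
      simp only [rescale, if_pos hωS, ← hes, ← hmdef]
      exact div_self hm
    · simp [rescale, hωS]

/-- The value of the homogeneous extension on a face. -/
noncomputable def extVal {j : ℕ} {A : Type*} [NonUnitalCStarAlgebra A]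
    (f : skeleton Ω j → A) (S : Finset Ω) (hS : S.card = j + 1) (t : Ω → ℝ)
    (ht : t ∈ face Ω S) : A :=
  if h : S.sup' (nonempty_of_card_succ hS) t = 0 then 0
  else (S.sup' (nonempty_of_card_succ hS) t) •
    f ⟨rescale Ω S (S.sup' (nonempty_of_card_succ hS) t) t, rescale_mem_skeleton hS ht h⟩

lemma extVal_eq_self {j : ℕ} {A : Type*} [NonUnitalCStarAlgebra A]
    (f : skeleton Ω j → A) (S : Finset Ω) (hS : S.card = j + 1) (t : Ω → ℝ)
    (ht : t ∈ face Ω S) (h1 : S.sup' (nonempty_of_card_succ hS) t = 1)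
    (mem : t ∈ skeleton Ω j) : extVal f S hS t ht = f ⟨t, mem⟩ := by
  have hne := nonempty_of_card_succ hS
  have h0 : S.sup' (nonempty_of_card_succ hS) t ≠ 0 := by rw [h1]; exact one_ne_zero
  have hrt : rescale Ω S (S.sup' (nonempty_of_card_succ hS) t) t = t := by
    funext ω
    by_cases hω : ω ∈ S
    · simp [rescale, hω, h1]
    · simp [rescale, hω, (ht.2 ω hω).symm]
  rw [extVal, dif_neg h0]
  have heq : (⟨rescale Ω S (S.sup' (nonempty_of_card_succ hS) t) t,
      rescale_mem_skeleton hS ht h0⟩ : skeleton Ω j) = ⟨t, mem⟩ := Subtype.ext hrt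
  rw [heq, h1, one_smul]

lemma exists_one_of_ne {S S' : Finset Ω} {j j' : ℕ} (hS : S.card = j + 1) (hS' : S'.card = j')
    (hlt : j' < j + 1) {t : Ω → ℝ} (ht' : t ∈ face Ω S') :
    ∃ s ∈ S, t s = 1 := by
  have : ∃ s ∈ S, s ∉ S' := by
    by_contra h
    push_neg at h
    have := Finset.card_le_card h
    omega
  obtain ⟨s, hs, hs'⟩ := this
  exact ⟨s, hs, ht'.2 s hs'⟩

lemma sup'_eq_one_of_exists {S : Finset Ω} (hne : S.Nonempty) {t : Ω → ℝ}
    (ht : t ∈ face Ω S) (h : ∃ s ∈ S, t s = 1) : S.sup' hne t = 1 := by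
  obtain ⟨s, hs, hts⟩ := h
  exact le_antisymm (sup'_le_one_of_face hne ht) (hts ▸ Finset.le_sup' t hs)

lemma extVal_indep {j : ℕ} {A : Type*} [NonUnitalCStarAlgebra A]
    (f : skeleton Ω j → A) (S S' : Finset Ω) (hS : S.card = j + 1) (hS' : S'.card = j + 1)
    (t : Ω → ℝ) (ht : t ∈ face Ω S) (ht' : t ∈ face Ω S') :
    extVal f S hS t ht = extVal f S' hS' t ht' := by
  rcases eq_or_ne S S' with rfl | hne'
  · rfl
  · have hex : ∃ s ∈ S, s ∉ S' := by
      by_contra h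
      push_neg at h
      exact hne' (Finset.eq_of_subset_of_card_le h (by rw [hS, hS']))
    have hex' : ∃ s ∈ S', s ∉ S := by
      by_contra h
      push_neg at h
      exact hne' (Finset.eq_of_subset_of_card_le h (by rw [hS, hS'])).symm
    obtain ⟨s, hs, hsn⟩ := hex
    obtain ⟨s', hs', hsn'⟩ := hex'
    have h1 : S.sup' (nonempty_of_card_succ hS) t = 1 :=
      sup'_eq_one_of_exists _ ht ⟨s, hs, ht'.2 s hsn⟩
    have h1' : S'.sup' (nonempty_of_card_succ hS') t = 1 :=
      sup'_eq_one_of_exists _ ht' ⟨s', hs', ht.2 s' hsn'⟩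
    have mem : t ∈ skeleton Ω j := by
      have h0 : S.sup' (nonempty_of_card_succ hS) t ≠ 0 := by rw [h1]; exact one_ne_zero
      have := rescale_mem_skeleton hS ht h0
      have hrt : rescale Ω S (S.sup' (nonempty_of_card_succ hS) t) t = t := by
        funext ω
        by_cases hω : ω ∈ S
        · simp [rescale, hω, h1]
        · simp [rescale, hω, (ht.2 ω hω).symm]
      rwa [hrt] at this
    rw [extVal_eq_self f S hS t ht h1 mem, extVal_eq_self f S' hS' t ht' h1' mem]

lemma continuous_sup'_comp {X : Type*} [TopologicalSpace X] (S : Finset Ω) (hne : S.Nonempty)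
    (g : X → Ω → ℝ) (hg : Continuous g) :
    Continuous fun x => S.sup' hne (g x) := by
  induction hne using Finset.Nonempty.cons_induction with
  | singleton a =>
      simp only [Finset.sup'_singleton]
      exact (continuous_apply a).comp hg
  | cons a s ha hs ih =>
      simp only [Finset.sup'_cons hs]
      exact ((continuous_apply a).comp hg).max ih

lemma continuous_extVal {j : ℕ} {A : Type*} [NonUnitalCStarAlgebra A]
    (f : skeleton Ω j → A) (hf : Continuous f) (C : ℝ) (hC : ∀ y, ‖f y‖ ≤ C)
    (S : Finset Ω) (hS : S.card = j + 1) {X : Type*} [TopologicalSpace X]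
    (p : X → Ω → ℝ) (hp : Continuous p) (hmem : ∀ x, p x ∈ face Ω S) :
    Continuous fun x => extVal f S hS (p x) (hmem x) := by
  have hne := nonempty_of_card_succ hS
  set m : X → ℝ := fun x => S.sup' (nonempty_of_card_succ hS) (p x) with hmdef
  have hm : Continuous m := continuous_sup'_comp S _ p hp
  rw [continuous_iff_continuousAt]
  intro x₀
  by_cases h0 : m x₀ = 0
  · have hval0 : extVal f S hS (p x₀) (hmem x₀) = 0 := dif_pos h0
    rw [ContinuousAt, hval0]
    have hbound : ∀ x, ‖extVal f S hS (p x) (hmem x)‖ ≤ C * m x := by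
      intro x
      by_cases hx : m x = 0
      · rw [extVal, dif_pos hx, hx, mul_zero, norm_zero]
      · rw [extVal, dif_neg hx, norm_smul, Real.norm_eq_abs,
          abs_of_nonneg (sup'_nonneg_of_face _ (hmem x)), mul_comm]
        exact mul_le_mul_of_nonneg_right (hC _) (sup'_nonneg_of_face _ (hmem x))
    refine squeeze_zero_norm hbound ?_
    have : Continuous fun x => C * m x := continuous_const.mul hm
    have h := this.tendsto x₀
    rwa [h0, mul_zero] at h
  · have hpos : 0 < m x₀ := lt_of_le_of_ne (sup'_nonneg_of_face _ (hmem x₀)) (Ne.symm h0)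
    have hUopen : IsOpen {x | 0 < m x} := isOpen_lt continuous_const hm
    refine ContinuousOn.continuousAt ?_ (hUopen.mem_nhds hpos)
    rw [continuousOn_iff_continuous_restrict]
    have hρcont : Continuous fun z : {x | 0 < m x} =>
        (⟨rescale Ω S (m z.1) (p z.1), rescale_mem_skeleton hS (hmem z.1) (ne_of_gt z.2)⟩ :
          skeleton Ω j) := by
      refine Continuous.subtype_mk ?_ _
      refine continuous_pi fun ω => ?_
      by_cases hω : ω ∈ S
      · simp only [rescale, if_pos hω]
        exact (((continuous_apply ω).comp hp).comp continuous_subtype_val).div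
          (hm.comp continuous_subtype_val) fun z => ne_of_gt z.2
      · simp only [rescale, if_neg hω]
        exact continuous_const
    have heq : (Set.domRestrict {x | 0 < m x} fun x => extVal f S hS (p x) (hmem x)) =
        fun z : {x | 0 < m x} => (m z.1) •
          f ⟨rescale Ω S (m z.1) (p z.1), rescale_mem_skeleton hS (hmem z.1) (ne_of_gt z.2)⟩ := by
      funext z
      exact dif_neg (ne_of_gt z.2)
    rw [heq]
    exact (hm.comp continuous_subtype_val).smul (hf.comp hρcont)

variable (Ω)

/-- Let `f` be a continuous function on the skeleton `Y_j` (`j < |Ω|`), with values in a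
C*-algebra `A`, vanishing on `Y_{j-1}` when `j ≥ 1`.  Then there is a (necessarily unique,
i.e. well-defined) function `f̃` on `Y_{j+1}` such that for every `S` with `|S| = j + 1`
and every `t ∈ F_S`, writing `m = max_{s ∈ S} t s`, one has `f̃ t = 0` if `m = 0` and
`f̃ t = m • f (r_S t)` (with `r_S t ∈ Y_j`) if `m ≠ 0`.  Moreover `f̃` is continuous,
agrees with `f` on `Y_j`, satisfies `‖f̃ t‖ ≤ sup_{y ∈ Y_j} ‖f y‖`, and is positive
whenever `f` is. -/
theorem exists_homogeneous_extension
    {Ω : Type*} [Fintype Ω] [DecidableEq Ω]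
    {A : Type*} [NonUnitalCStarAlgebra A] [PartialOrder A] [StarOrderedRing A]
    (j : ℕ) (hj : j < Fintype.card Ω)
    (f : skeleton Ω j → A) (hf : Continuous f)
    (hvanish : ∀ t : skeleton Ω j, 1 ≤ j → (t : Ω → ℝ) ∈ skeleton Ω (j - 1) → f t = 0) :
    ∃ ftilde : skeleton Ω (j + 1) → A,
      (∀ (S : Finset Ω) (hS : S.card = j + 1) (t : Ω → ℝ) (ht : t ∈ face Ω S)
          (m : ℝ) (hm : IsGreatest ((fun s => t s) '' (S : Set Ω)) m),
        (m = 0 → ftilde ⟨t, S, hS, ht⟩ = 0) ∧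
        (m ≠ 0 → ∃ hr : rescale Ω S m t ∈ skeleton Ω j,
          ftilde ⟨t, S, hS, ht⟩ = m • f ⟨rescale Ω S m t, hr⟩)) ∧
      Continuous ftilde ∧
      (∀ (t : Ω → ℝ) (ht : t ∈ skeleton Ω j) (ht' : t ∈ skeleton Ω (j + 1)),
        ftilde ⟨t, ht'⟩ = f ⟨t, ht⟩) ∧
      (∀ t : skeleton Ω (j + 1), ‖ftilde t‖ ≤ ⨆ y : skeleton Ω j, ‖f y‖) ∧
      ((∀ y : skeleton Ω j, 0 ≤ f y) → ∀ t : skeleton Ω (j + 1), 0 ≤ ftilde t) := by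
  classical
  haveI : CompactSpace (skeleton Ω j) := isCompact_iff_compactSpace.mp (isCompact_skeleton j)
  haveI hne_skel : Nonempty (skeleton Ω j) := (skeleton_nonempty hj.le).to_subtype
  have hbdd : BddAbove (Set.range fun y : skeleton Ω j => ‖f y‖) :=
    (isCompact_range hf.norm).bddAbove
  obtain ⟨C, hC⟩ := hbdd
  have hC' : ∀ y, ‖f y‖ ≤ C := fun y => hC ⟨y, rfl⟩
  set ftilde : skeleton Ω (j + 1) → A :=
    fun x => extVal f x.2.choose x.2.choose_spec.1 x.1 x.2.choose_spec.2 with hftdef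
  have hkey : ∀ (S : Finset Ω) (hS : S.card = j + 1) (t : Ω → ℝ) (ht : t ∈ face Ω S)
      (h : t ∈ skeleton Ω (j + 1)), ftilde ⟨t, h⟩ = extVal f S hS t ht := by
    intro S hS t ht h
    exact extVal_indep f _ S h.choose_spec.1 hS t h.choose_spec.2 ht
  refine ⟨ftilde, ?_, ?_, ?_, ?_, ?_⟩
  · -- defining property
    intro S hS t ht m hm
    have hmeq : m = S.sup' (nonempty_of_card_succ hS) t :=
      hm.unique (isGreatest_sup' S _ t)
    subst hmeq
    rw [hkey S hS t ht ⟨S, hS, ht⟩]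
    constructor
    · intro h0
      exact dif_pos h0
    · intro h0
      exact ⟨rescale_mem_skeleton hS ht h0, dif_neg h0⟩
  · -- continuity
    refine (locallyFinite_of_finite fun S : {S : Finset Ω // S.card = j + 1} =>
        {x : skeleton Ω (j + 1) | (x : Ω → ℝ) ∈ face Ω S.1}).continuous ?_ ?_ ?_
    · rw [Set.eq_univ_iff_forall]
      intro x
      obtain ⟨S, hS, ht⟩ := x.2
      exact Set.mem_iUnion.mpr ⟨⟨S, hS⟩, ht⟩
    · exact fun S => (isClosed_face S.1).preimage continuous_subtype_val
    · intro S
      rw [continuousOn_iff_continuous_restrict]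
      have heq : Set.domRestrict {x : skeleton Ω (j + 1) | (x : Ω → ℝ) ∈ face Ω S.1} ftilde =
          fun z => extVal f S.1 S.2 (z.1 : Ω → ℝ) z.2 := by
        funext z
        have : ftilde ⟨(z.1 : Ω → ℝ), z.1.2⟩ = extVal f S.1 S.2 (z.1 : Ω → ℝ) z.2 :=
          hkey S.1 S.2 _ z.2 z.1.2
        exact this
      rw [heq]
      exact continuous_extVal f hf C hC' S.1 S.2 _
        (continuous_subtype_val.comp continuous_subtype_val) _
  · -- agreement with f
    intro t ht ht'
    obtain ⟨S, hS, htS⟩ := id ht'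
    obtain ⟨S', hS', htS'⟩ := id ht
    rw [hkey S hS t htS ht']
    have h1 : S.sup' (nonempty_of_card_succ hS) t = 1 :=
      sup'_eq_one_of_exists _ htS (exists_one_of_ne hS hS' (by omega) htS')
    exact extVal_eq_self f S hS t htS h1 ht
  · -- norm bound
    intro x
    obtain ⟨S, hS, htS⟩ := id x.2
    have hx : ftilde x = extVal f S hS (x : Ω → ℝ) htS := hkey S hS _ htS x.2
    rw [hx]
    by_cases h0 : S.sup' (nonempty_of_card_succ hS) (x : Ω → ℝ) = 0
    · rw [extVal, dif_pos h0, norm_zero]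
      obtain ⟨y₀⟩ := hne_skel
      exact le_trans (norm_nonneg (f y₀)) (le_ciSup ⟨C, hC⟩ y₀)
    · rw [extVal, dif_neg h0, norm_smul, Real.norm_eq_abs,
        abs_of_nonneg (sup'_nonneg_of_face _ htS)]
      calc S.sup' (nonempty_of_card_succ hS) (x : Ω → ℝ) * ‖f _‖
          ≤ 1 * (⨆ y : skeleton Ω j, ‖f y‖) :=
            mul_le_mul (sup'_le_one_of_face _ htS) (le_ciSup ⟨C, hC⟩ _)
              (norm_nonneg _) zero_le_one
        _ = ⨆ y : skeleton Ω j, ‖f y‖ := one_mul _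
  · -- positivity
    intro hpos x
    obtain ⟨S, hS, htS⟩ := id x.2
    have hx : ftilde x = extVal f S hS (x : Ω → ℝ) htS := hkey S hS _ htS x.2
    rw [hx]
    by_cases h0 : S.sup' (nonempty_of_card_succ hS) (x : Ω → ℝ) = 0
    · rw [extVal, dif_pos h0]
    · rw [extVal, dif_neg h0]
      exact smul_nonneg (sup'_nonneg_of_face _ htS) (hpos _)


end HomogeneousExtension
end
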